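/- Let 1 ≤ p < ∞ and let (s_{j,k})_{j≥0, 0≤k≤H_j} be nonnegative reals with multiplicities H_{j,k} ≥ c · w · 2^{j(n−ñ)} for some w > 0 and all j,k. Then for s > ñ/p and any q with 1 ≤ q ≤ ∞: ∑_{j=0}^∞ 2^{-j(s−n/p)} s_{j,k_j} ≤ C w^{-1/p} (∑_{j=0}^∞ (∑_k H_{j,k} s_{j,k}^p)^{q/p})^{1/q} for any choice of indices k_j, with C independent of w and the sequence (usual modification for q = ∞). -/

import Mathlib

open ENNReal

/-- Let `1 ≤ p < ∞` and let `(s_{j,k})_{j≥0, 0≤k≤H_j}` be nonnegative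
reals with multiplicities `H_{j,k} ≥ c·w·2^{j(n−ñ)}` for some `w > 0` and all `j,k`.
Then for `s > ñ/p` and any `1 ≤ q ≤ ∞` (with the `ℓ_q`-modification for `q = ∞`):
`∑_j 2^{-j(s−n/p)} s_{j,k_j} ≤ C w^{-1/p} (∑_j (∑_k H_{j,k} s_{j,k}^p)^{q/p})^{1/q}`
for any choice of indices `k_j`, with `C` independent of `w` and the sequence.
Here `nt` plays the role of `ñ`; sums and norms are taken in `[0,∞]`. -/
theorem strauss_besov_sequence_estimate (n nt : ℕ) (hnt : nt ≤ n)
    (p s c : ℝ) (hp : 1 ≤ p) (hc : 0 < c) (q : ℝ≥0∞) (hq : 1 ≤ q)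
    (hs : (nt : ℝ) / p < s) :
    ∃ C : ℝ, 0 < C ∧
      ∀ w : ℝ, 0 < w →
      ∀ (H : ℕ → ℕ) (Hjk : ℕ → ℕ → ℕ),
        (∀ j k : ℕ, k ≤ H j → c * w * (2 : ℝ) ^ ((j : ℝ) * ((n : ℝ) - nt)) ≤ Hjk j k) →
      ∀ scoef : ℕ → ℕ → ℝ, (∀ j k, 0 ≤ scoef j k) →
      ∀ kchoice : ℕ → ℕ, (∀ j, kchoice j ≤ H j) →
        ∑' j : ℕ, ENNReal.ofReal ((2 : ℝ) ^ (-(j : ℝ) * (s - (n : ℝ) / p)) * scoef j (kchoice j))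
          ≤ ENNReal.ofReal C * ENNReal.ofReal (w ^ (-1 / p)) *
            (if q = ∞ then
              ⨆ j : ℕ, (∑ k ∈ Finset.range (H j + 1),
                  (Hjk j k : ℝ≥0∞) * ENNReal.ofReal (scoef j k) ^ p) ^ (1 / p)
            else
              (∑' j : ℕ, (∑ k ∈ Finset.range (H j + 1),
                  (Hjk j k : ℝ≥0∞) * ENNReal.ofReal (scoef j k) ^ p) ^ (q.toReal / p))
                ^ (1 / q.toReal)) := by
  have hp0 : (0:ℝ) < p := lt_of_lt_of_le one_pos hp
  have hε : 0 < s - (nt:ℝ) / p := sub_pos.mpr hs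
  set r : ℝ := (2:ℝ) ^ (-(s - (nt:ℝ) / p)) with hrdef
  have hr0 : 0 < r := Real.rpow_pos_of_pos two_pos _
  have hr1 : r < 1 := Real.rpow_lt_one_of_one_lt_of_neg one_lt_two (neg_neg_of_pos hε)
  have h1r : (0:ℝ) < 1 - r := by linarith
  refine ⟨c ^ (-(1/p)) * (1 - r)⁻¹, by positivity, ?_⟩
  intro w hw H Hjk hH scoef hs0 kchoice hkc
  set S : ℕ → ℝ≥0∞ := fun j => ∑ k ∈ Finset.range (H j + 1),
      (Hjk j k : ℝ≥0∞) * ENNReal.ofReal (scoef j k) ^ p with hSdef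
  set b : ℕ → ℝ≥0∞ := fun j => (S j) ^ (1/p) with hbdef
  -- the key pointwise estimate
  have key : ∀ j : ℕ,
      ENNReal.ofReal (scoef j (kchoice j)) ≤
        ENNReal.ofReal ((c * w * (2:ℝ) ^ ((j:ℝ) * ((n:ℝ) - nt))) ^ (-(1/p))) * b j := by
    intro j
    set A : ℝ := c * w * (2:ℝ) ^ ((j:ℝ) * ((n:ℝ) - nt)) with hAdef
    have hA : 0 < A := by positivity
    have h1 : ENNReal.ofReal A * ENNReal.ofReal (scoef j (kchoice j)) ^ p ≤ S j := by
      refine le_trans ?_ (Finset.single_le_sum (f := fun k =>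
        (Hjk j k : ℝ≥0∞) * ENNReal.ofReal (scoef j k) ^ p)
        (fun i _ => zero_le) (Finset.mem_range.mpr (Nat.lt_succ_of_le (hkc j))))
      have : ENNReal.ofReal A ≤ (Hjk j (kchoice j) : ℝ≥0∞) := by
        rw [← ENNReal.ofReal_natCast]
        exact ENNReal.ofReal_le_ofReal (hH j (kchoice j) (hkc j))
      exact mul_le_mul_left this _
    have h2 : (ENNReal.ofReal A * ENNReal.ofReal (scoef j (kchoice j)) ^ p) ^ (1/p) ≤ b j :=
      ENNReal.rpow_le_rpow h1 (by positivity)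
    have h3 : (ENNReal.ofReal A * ENNReal.ofReal (scoef j (kchoice j)) ^ p) ^ (1/p)
        = ENNReal.ofReal (A ^ (1/p)) * ENNReal.ofReal (scoef j (kchoice j)) := by
      rw [ENNReal.mul_rpow_of_nonneg _ _ (by positivity), ← ENNReal.rpow_mul,
        mul_one_div, div_self hp0.ne', ENNReal.rpow_one, ENNReal.ofReal_rpow_of_pos hA]
    calc ENNReal.ofReal (scoef j (kchoice j))
        = ENNReal.ofReal (A ^ (-(1/p))) *
            (ENNReal.ofReal (A ^ (1/p)) * ENNReal.ofReal (scoef j (kchoice j))) := by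
          rw [← mul_assoc, ← ENNReal.ofReal_mul (by positivity), ← Real.rpow_add hA,
            neg_add_cancel, Real.rpow_zero, ENNReal.ofReal_one, one_mul]
      _ ≤ ENNReal.ofReal (A ^ (-(1/p))) * b j := by
          exact mul_le_mul_right (h3 ▸ h2) _
  -- real-number identity for the weights
  have hreal : ∀ j : ℕ,
      (2:ℝ) ^ (-(j:ℝ) * (s - (n:ℝ) / p)) *
        (c * w * (2:ℝ) ^ ((j:ℝ) * ((n:ℝ) - nt))) ^ (-(1/p))
      = (c ^ (-(1/p)) * w ^ (-(1/p))) * r ^ j := by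
    intro j
    rw [Real.mul_rpow (by positivity) (by positivity),
      Real.mul_rpow (le_of_lt hc) (le_of_lt hw),
      ← Real.rpow_natCast r j, hrdef, ← Real.rpow_mul (by norm_num : (0:ℝ) ≤ 2),
      ← Real.rpow_mul (by norm_num : (0:ℝ) ≤ 2)]
    rw [show (2:ℝ) ^ (-(j:ℝ) * (s - (n:ℝ) / p)) * (c ^ (-(1/p)) * w ^ (-(1/p)) *
        (2:ℝ) ^ ((j:ℝ) * ((n:ℝ) - nt) * (-(1/p))))
      = (c ^ (-(1/p)) * w ^ (-(1/p))) * ((2:ℝ) ^ (-(j:ℝ) * (s - (n:ℝ) / p)) *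
        (2:ℝ) ^ ((j:ℝ) * ((n:ℝ) - nt) * (-(1/p)))) by ring,
      ← Real.rpow_add two_pos]
    congr 2
    field_simp
    ring
  -- bound each b j by the Besov norm N
  set N : ℝ≥0∞ := (if q = ∞ then ⨆ j : ℕ, (S j) ^ (1/p)
      else (∑' j : ℕ, (S j) ^ (q.toReal / p)) ^ (1 / q.toReal)) with hNdef
  have hbN : ∀ j, b j ≤ N := by
    intro j
    by_cases hq' : q = ∞
    · rw [hNdef, if_pos hq']
      exact le_iSup (fun j => (S j) ^ (1/p)) j
    · rw [hNdef, if_neg hq']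
      have hq0 : 0 < q.toReal :=
        ENNReal.toReal_pos (by intro h; rw [h] at hq; exact absurd hq (by simp)) hq'
      have : (S j) ^ (q.toReal / p) ≤ ∑' i : ℕ, (S i) ^ (q.toReal / p) :=
        ENNReal.le_tsum j
      have := ENNReal.rpow_le_rpow this (by positivity : (0:ℝ) ≤ 1 / q.toReal)
      have hexp : q.toReal / p * (1 / q.toReal) = 1 / p := by
        field_simp
      rw [← ENNReal.rpow_mul, hexp] at this
      exact this
  -- main chain
  calc ∑' j : ℕ, ENNReal.ofReal ((2:ℝ) ^ (-(j:ℝ) * (s - (n:ℝ) / p)) * scoef j (kchoice j))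
      ≤ ∑' j : ℕ, ENNReal.ofReal (c ^ (-(1/p)) * w ^ (-(1/p))) *
          ((ENNReal.ofReal r) ^ j * N) := by
        refine ENNReal.tsum_le_tsum fun j => ?_
        rw [ENNReal.ofReal_mul (by positivity)]
        calc ENNReal.ofReal ((2:ℝ) ^ (-(j:ℝ) * (s - (n:ℝ) / p))) *
              ENNReal.ofReal (scoef j (kchoice j))
            ≤ ENNReal.ofReal ((2:ℝ) ^ (-(j:ℝ) * (s - (n:ℝ) / p))) *
              (ENNReal.ofReal ((c * w * (2:ℝ) ^ ((j:ℝ) * ((n:ℝ) - nt))) ^ (-(1/p))) * b j) :=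
              mul_le_mul_right (key j) _
          _ = ENNReal.ofReal ((c ^ (-(1/p)) * w ^ (-(1/p))) * r ^ j) * b j := by
              rw [← mul_assoc, ← ENNReal.ofReal_mul (by positivity), hreal j]
          _ = ENNReal.ofReal (c ^ (-(1/p)) * w ^ (-(1/p))) * ((ENNReal.ofReal r) ^ j * b j) := by
              rw [ENNReal.ofReal_mul (by positivity), ENNReal.ofReal_pow (le_of_lt hr0),
                mul_assoc]
          _ ≤ ENNReal.ofReal (c ^ (-(1/p)) * w ^ (-(1/p))) * ((ENNReal.ofReal r) ^ j * N) := by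
              exact mul_le_mul_right (mul_le_mul_right (hbN j) _) _
    _ = ENNReal.ofReal (c ^ (-(1/p)) * w ^ (-(1/p))) * ((1 - ENNReal.ofReal r)⁻¹ * N) := by
        rw [ENNReal.tsum_mul_left, ENNReal.tsum_mul_right, ENNReal.tsum_geometric]
    _ = ENNReal.ofReal (c ^ (-(1/p)) * (1 - r)⁻¹) * ENNReal.ofReal (w ^ (-1 / p)) * N := by
        rw [ENNReal.ofReal_mul (by positivity), ENNReal.ofReal_mul (by positivity),
          ENNReal.ofReal_inv_of_pos (by linarith), ENNReal.ofReal_sub 1 (le_of_lt hr0),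
          ENNReal.ofReal_one, neg_div, neg_div' ]
        ring
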